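/- Let d ≥ 5 and let φ be a measurable function on ℝ^d with 0 ≤ φ ≤ 1 and φ = 0 outside B_1. Then there exists a finite constant K_d depending only on d such that for every x ∈ ℝ^d and every integer p ≥ 1, M_p^φ(x) ≤ K_d^p · p! · (|x|^{2−d} ∧ 1). -/

import Mathlib

open MeasureTheory ENNReal NNReal
open Metric

noncomputable def greenC (d : ℕ) : ℝ :=
  Real.Gamma ((d : ℝ) / 2 - 1) / (2 * Real.pi ^ ((d : ℝ) / 2))

noncomputable def green (d : ℕ) (x y : EuclideanSpace ℝ (Fin d)) : ℝ :=
  greenC d * ‖x - y‖ ^ ((2 : ℝ) - d)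

noncomputable def M (d : ℕ) (φ : EuclideanSpace ℝ (Fin d) → ℝ) :
    ℕ → EuclideanSpace ℝ (Fin d) → ℝ≥0∞
  | 0 => fun _ => 0
  | 1 => fun x => ∫⁻ y, ENNReal.ofReal (green d x y) * ENNReal.ofReal (φ y)
  | (p + 2) => fun x =>
      ∑ j ∈ (Finset.Icc 1 (p + 1)).attach,
        ((p + 2).choose j.1 : ℝ≥0∞) *
          ∫⁻ z, ENNReal.ofReal (green d x z) * M d φ j.1 z * M d φ (p + 2 - j.1) z
  termination_by p => p
  decreasing_by
  · have := Finset.mem_Icc.mp j.2; omega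
  · have := Finset.mem_Icc.mp j.2; omega

noncomputable def hfun (d : ℕ) (x : EuclideanSpace ℝ (Fin d)) : ℝ≥0∞ :=
  min ((ENNReal.ofReal ‖x‖) ^ ((2 : ℝ) - d)) 1

noncomputable def wfun (d : ℕ) (z : EuclideanSpace ℝ (Fin d)) : ℝ≥0∞ :=
  min ((ENNReal.ofReal ‖z‖) ^ ((4 : ℝ) - 2 * d)) 1

lemma rpow_anti {x y : ℝ≥0∞} (hxy : x ≤ y) {r : ℝ} (hr : r ≤ 0) : y ^ r ≤ x ^ r := by
  have h1 : y ^ r = (y ^ (-r))⁻¹ := by rw [← ENNReal.rpow_neg, neg_neg]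
  have h2 : x ^ r = (x ^ (-r))⁻¹ := by rw [← ENNReal.rpow_neg, neg_neg]
  rw [h1, h2]
  exact ENNReal.inv_le_inv.2 (ENNReal.rpow_le_rpow hxy (neg_nonneg.2 hr))

lemma one_le_rpow_of_le_one {x : ℝ≥0∞} (hx : x ≤ 1) {r : ℝ} (hr : r ≤ 0) : 1 ≤ x ^ r := by
  have := rpow_anti hx hr
  simpa using this

lemma hfun_mul_self {d : ℕ} (hd : 5 ≤ d) (z : EuclideanSpace ℝ (Fin d)) :
    hfun d z * hfun d z = wfun d z := by
  have hexp : (4 : ℝ) - 2 * d = ((2 : ℝ) - d) + ((2 : ℝ) - d) := by ring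
  have hneg : (2 : ℝ) - d < 0 := by
    have : (5 : ℝ) ≤ d := by exact_mod_cast hd
    linarith
  set a := (ENNReal.ofReal ‖z‖) ^ ((2 : ℝ) - d) with ha
  have haa : a * a = (ENNReal.ofReal ‖z‖) ^ ((4 : ℝ) - 2 * d) := by
    rcases eq_or_ne (ENNReal.ofReal ‖z‖) 0 with h0 | h0
    · rw [ha, h0, ENNReal.zero_rpow_of_neg hneg, ENNReal.zero_rpow_of_neg (by linarith)]
      simp
    · rw [hexp, ENNReal.rpow_add _ _ h0 ENNReal.ofReal_ne_top]
  rw [hfun, wfun, ← haa, ← ha]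
  rcases le_total a 1 with h | h
  · rw [min_eq_left h, min_eq_left (by calc a * a ≤ 1 * 1 := mul_le_mul' h h
        _ = 1 := one_mul 1)]
  · rw [min_eq_right h, min_eq_right (by calc (1:ℝ≥0∞) = 1 * 1 := (one_mul 1).symm
        _ ≤ a * a := mul_le_mul' h h), one_mul]

lemma rpow_ne_top_of_one_le {x : ℝ≥0∞} (hx : 1 ≤ x) {r : ℝ} (hr : r ≤ 0) : x ^ r ≠ ∞ := by
  have h := ENNReal.rpow_le_rpow_of_exponent_le hx hr
  rw [ENNReal.rpow_zero] at h
  exact (lt_of_le_of_lt h ENNReal.one_lt_top).ne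

lemma wfun_le_one {d : ℕ} (z : EuclideanSpace ℝ (Fin d)) : wfun d z ≤ 1 := min_le_right _ _

/-- The integral of `‖x-z‖^{2-d}` over a ball of radius `R` centered at `x` is `≲ R^2`. -/
lemma lintegral_ball_le {d : ℕ} (hd : 5 ≤ d) (x : EuclideanSpace ℝ (Fin d)) {R : ℝ} (hR : 0 < R) :
    ∫⁻ z in ball x R, (ENNReal.ofReal ‖x - z‖) ^ ((2 : ℝ) - d) ≤
      volume (ball (0 : EuclideanSpace ℝ (Fin d)) 1) * (2 : ℝ≥0∞) ^ (d : ℕ) * 2 *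
        ENNReal.ofReal (R ^ 2) := by
  classical
  haveI : Nonempty (Fin d) := ⟨⟨0, by omega⟩⟩
  set V := volume (ball (0 : EuclideanSpace ℝ (Fin d)) 1) with hV
  set f : EuclideanSpace ℝ (Fin d) → ℝ≥0∞ := fun z => (ENNReal.ofReal ‖x - z‖) ^ ((2 : ℝ) - d) with hf
  set S : ℕ → Set (EuclideanSpace ℝ (Fin d)) := fun k => {z : EuclideanSpace ℝ (Fin d) | R * (1/2) ^ (k+1) ≤ ‖x - z‖} ∩ ball x (R * (1/2) ^ k)
    with hS
  -- coverage
  have hcov : ball x R ⊆ {x} ∪ ⋃ k, S k := by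
    intro z hz
    rcases eq_or_ne z x with rfl | hzx
    · exact Or.inl rfl
    · right
      have ht0 : 0 < ‖x - z‖ := by
        rw [norm_pos_iff, sub_ne_zero]; exact fun h => hzx h.symm
      have htR : ‖x - z‖ < R := by
        have := mem_ball.1 hz
        rwa [dist_comm, dist_eq_norm] at this
      set t := ‖x - z‖ with htdef
      have hex : ∃ k, R * (1/2) ^ (k+1) ≤ t := by
        obtain ⟨n, hn⟩ := exists_pow_lt_of_lt_one (div_pos ht0 hR) (by norm_num : (1/2 : ℝ) < 1)
        refine ⟨n, le_of_lt ?_⟩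
        have h1 : ((1:ℝ)/2) ^ (n+1) ≤ (1/2) ^ n := by
          apply pow_le_pow_of_le_one (by norm_num) (by norm_num); omega
        have := lt_of_le_of_lt h1 hn
        calc R * (1/2) ^ (n+1) < R * (t / R) := by
              apply mul_lt_mul_of_pos_left this hR
          _ = t := by field_simp
      set k := Nat.find hex with hk
      have h1 : R * (1/2) ^ (k+1) ≤ t := Nat.find_spec hex
      have h2 : t < R * (1/2) ^ k := by
        rcases Nat.eq_zero_or_pos k with h0 | hpos
        · rw [h0]; simpa using htR
        · have := Nat.find_min hex (m := k - 1) (by omega)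
          push_neg at this
          have hk1 : k - 1 + 1 = k := by omega
          rwa [hk1] at this
      exact Set.mem_iUnion.2 ⟨k, ⟨h1, by rw [mem_ball, dist_comm, dist_eq_norm]; exact h2⟩⟩
  have hmeasS : ∀ k, MeasurableSet (S k) := by
    intro k
    apply MeasurableSet.inter
    · exact measurableSet_le measurable_const (by fun_prop)
    · exact measurableSet_ball
  -- per-shell bound
  have hshell : ∀ k, ∫⁻ z in S k, f z ≤
      V * (2 : ℝ≥0∞) ^ (d : ℕ) * ENNReal.ofReal (R ^ 2) * (2⁻¹ : ℝ≥0∞) ^ k := by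
    intro k
    have hpos1 : (0:ℝ) < R * (1/2) ^ (k+1) := by positivity
    have hb : ∀ z ∈ S k, f z ≤ ENNReal.ofReal ((R * (1/2) ^ (k+1)) ^ ((2:ℝ) - d)) := by
      intro z hz
      have h1 : R * (1/2) ^ (k+1) ≤ ‖x - z‖ := hz.1
      have : (ENNReal.ofReal ‖x - z‖) ^ ((2:ℝ) - d) ≤
          (ENNReal.ofReal (R * (1/2) ^ (k+1))) ^ ((2:ℝ) - d) := by
        apply rpow_anti (ENNReal.ofReal_le_ofReal h1)
        have : (5 : ℝ) ≤ d := by exact_mod_cast hd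
        linarith
      rw [ENNReal.ofReal_rpow_of_pos hpos1] at this
      exact this
    calc ∫⁻ z in S k, f z ≤ ∫⁻ _ in S k, ENNReal.ofReal ((R * (1/2) ^ (k+1)) ^ ((2:ℝ) - d)) :=
          setLIntegral_mono' (hmeasS k) hb
      _ = ENNReal.ofReal ((R * (1/2) ^ (k+1)) ^ ((2:ℝ) - d)) * volume (S k) :=
          setLIntegral_const _ _
      _ ≤ ENNReal.ofReal ((R * (1/2) ^ (k+1)) ^ ((2:ℝ) - d)) *
            (ENNReal.ofReal ((R * (1/2) ^ k) ^ (d : ℕ)) * V) := by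
          gcongr
          have hsub : S k ⊆ ball x (R * (1/2) ^ k) := Set.inter_subset_right
          calc volume (S k) ≤ volume (ball x (R * (1/2) ^ k)) := measure_mono hsub
            _ = ENNReal.ofReal ((R * (1/2) ^ k) ^ Module.finrank ℝ (EuclideanSpace ℝ (Fin d))) * V :=
                Measure.addHaar_ball volume x (by positivity)
            _ = ENNReal.ofReal ((R * (1/2) ^ k) ^ (d : ℕ)) * V := by
                rw [finrank_euclideanSpace_fin]
      _ ≤ V * (2 : ℝ≥0∞) ^ (d : ℕ) * ENNReal.ofReal (R ^ 2) * (2⁻¹ : ℝ≥0∞) ^ k := by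
          rw [← mul_assoc, ← ENNReal.ofReal_mul (by positivity)]
          have hreal : (R * (1/2) ^ (k+1)) ^ ((2:ℝ) - d) * (R * (1/2) ^ k) ^ (d : ℕ) =
              (2:ℝ) ^ ((d:ℝ) - 2) * R ^ 2 * ((1/2 : ℝ) ^ 2) ^ k := by
            set u : ℝ := (1/2) ^ k with hu
            have hu0 : (0:ℝ) < u := by positivity
            have hRu : (0:ℝ) < R * u := by positivity
            have e1 : R * (1/2) ^ (k+1) = (R * u) * 2⁻¹ := by
              rw [hu, pow_succ]; ring
            rw [e1, Real.mul_rpow (le_of_lt hRu) (by norm_num),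
              ← Real.rpow_natCast (R * u) d,
              show ((R*u) ^ ((2:ℝ) - d) * (2⁻¹:ℝ) ^ ((2:ℝ) - d)) * (R*u) ^ ((d:ℕ):ℝ)
                = ((R*u) ^ ((2:ℝ) - d) * (R*u) ^ ((d:ℕ):ℝ)) * (2⁻¹:ℝ) ^ ((2:ℝ) - d) by ring,
              ← Real.rpow_add hRu]
            have e2 : (2:ℝ) - d + (d:ℕ) = 2 := by push_cast; ring
            have e3 : ((2:ℝ)⁻¹) ^ ((2:ℝ) - d) = (2:ℝ) ^ ((d:ℝ) - 2) := by
              rw [Real.inv_rpow (by norm_num), ← Real.rpow_neg (by norm_num)]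
              norm_num
            rw [e2, e3]
            have e4 : ((R*u) : ℝ) ^ (2:ℝ) = R^2 * ((1/2:ℝ)^2)^k := by
              rw [Real.rpow_two]
              rw [hu, mul_pow, ← pow_mul, ← pow_mul, Nat.mul_comm]
            rw [e4]; ring
          rw [hreal]
          have : ENNReal.ofReal ((2:ℝ) ^ ((d:ℝ) - 2) * R ^ 2 * ((1/2:ℝ) ^ 2) ^ k)
              ≤ ((2 : ℝ≥0∞) ^ (d : ℕ) * ENNReal.ofReal (R ^ 2)) * (2⁻¹ : ℝ≥0∞) ^ k := by
            rw [ENNReal.ofReal_mul (by positivity), ENNReal.ofReal_mul (by positivity)]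
            have i1 : ENNReal.ofReal ((2:ℝ) ^ ((d:ℝ) - 2)) ≤ (2 : ℝ≥0∞) ^ (d : ℕ) := by
              calc ENNReal.ofReal ((2:ℝ) ^ ((d:ℝ) - 2)) ≤ ENNReal.ofReal ((2:ℝ) ^ ((d:ℝ))) := by
                    apply ENNReal.ofReal_le_ofReal
                    apply Real.rpow_le_rpow_of_exponent_le (by norm_num)
                    linarith
                _ = ENNReal.ofReal ((2:ℝ) ^ (d:ℕ)) := by rw [Real.rpow_natCast]
                _ = (2 : ℝ≥0∞) ^ (d : ℕ) := by
                    rw [ENNReal.ofReal_pow (by norm_num)]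
                    norm_num
            have i2 : ENNReal.ofReal (((1/2:ℝ) ^ 2) ^ k) ≤ (2⁻¹ : ℝ≥0∞) ^ k := by
              rw [ENNReal.ofReal_pow (by positivity)]
              apply pow_le_pow_left' _ k
              rw [show ((1:ℝ)/2)^2 = (1/4 : ℝ) by norm_num]
              rw [show (2⁻¹ : ℝ≥0∞) = ENNReal.ofReal (1/2) by
                rw [ENNReal.ofReal_div_of_pos (by norm_num)]; norm_num]
              exact ENNReal.ofReal_le_ofReal (by norm_num)
            calc ENNReal.ofReal ((2:ℝ) ^ ((d:ℝ) - 2)) * ENNReal.ofReal (R^2) *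
                  ENNReal.ofReal (((1/2:ℝ) ^ 2) ^ k)
                ≤ ((2 : ℝ≥0∞) ^ (d : ℕ)) * ENNReal.ofReal (R^2) * (2⁻¹ : ℝ≥0∞) ^ k := by
                  gcongr
              _ = ((2 : ℝ≥0∞) ^ (d : ℕ) * ENNReal.ofReal (R ^ 2)) * (2⁻¹ : ℝ≥0∞) ^ k := by ring
          calc ENNReal.ofReal ((2:ℝ) ^ ((d:ℝ) - 2) * R ^ 2 * ((1/2:ℝ) ^ 2) ^ k) * V
              ≤ (((2 : ℝ≥0∞) ^ (d : ℕ) * ENNReal.ofReal (R ^ 2)) * (2⁻¹ : ℝ≥0∞) ^ k) * V := by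
                gcongr
            _ = V * (2 : ℝ≥0∞) ^ (d : ℕ) * ENNReal.ofReal (R ^ 2) * (2⁻¹ : ℝ≥0∞) ^ k := by ring
  -- sum up
  calc ∫⁻ z in ball x R, f z ≤ ∫⁻ z in {x} ∪ ⋃ k, S k, f z := lintegral_mono_set hcov
    _ ≤ (∫⁻ z in {x}, f z) + ∫⁻ z in ⋃ k, S k, f z := lintegral_union_le _ _ _
    _ ≤ 0 + ∑' k, ∫⁻ z in S k, f z := by
        gcongr
        · have : volume ({x} : Set (EuclideanSpace ℝ (Fin d))) = 0 := measure_singleton x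
          rw [setLIntegral_measure_zero _ _ this]
        · exact lintegral_iUnion_le _ _
    _ ≤ ∑' k, V * (2 : ℝ≥0∞) ^ (d : ℕ) * ENNReal.ofReal (R ^ 2) * (2⁻¹ : ℝ≥0∞) ^ k := by
        rw [zero_add]
        exact ENNReal.tsum_le_tsum hshell
    _ = V * (2 : ℝ≥0∞) ^ (d : ℕ) * ENNReal.ofReal (R ^ 2) * (1 - 2⁻¹)⁻¹ := by
        rw [ENNReal.tsum_mul_left, ENNReal.tsum_geometric]
    _ = V * (2 : ℝ≥0∞) ^ (d : ℕ) * 2 * ENNReal.ofReal (R ^ 2) := by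
        rw [ENNReal.one_sub_inv_two]
        rw [show ((2⁻¹ : ℝ≥0∞))⁻¹ = 2 by simp]
        ring

lemma wfun_lintegral_lt_top {d : ℕ} (hd : 5 ≤ d) :
    ∫⁻ z : EuclideanSpace ℝ (Fin d), wfun d z < ∞ := by
  have hd5 : (5 : ℝ) ≤ d := by exact_mod_cast hd
  set r : ℝ := 2 * d - 4 with hr
  have hr0 : (0:ℝ) < r := by rw [hr]; linarith
  have hbound : ∀ z : EuclideanSpace ℝ (Fin d),
      wfun d z ≤ ENNReal.ofReal ((2:ℝ) ^ r) * ENNReal.ofReal ((1 + ‖z‖) ^ (-r)) := by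
    intro z
    have hz0 : (0:ℝ) ≤ ‖z‖ := norm_nonneg z
    have h1z : (0:ℝ) < 1 + ‖z‖ := by linarith
    rcases le_total (1:ℝ) ‖z‖ with h | h
    · have hzpos : (0:ℝ) < ‖z‖ := by linarith
      calc wfun d z ≤ (ENNReal.ofReal ‖z‖) ^ ((4:ℝ) - 2 * d) := min_le_left _ _
        _ = ENNReal.ofReal (‖z‖ ^ ((4:ℝ) - 2 * d)) := ENNReal.ofReal_rpow_of_pos hzpos
        _ ≤ ENNReal.ofReal ((2:ℝ) ^ r * (1 + ‖z‖) ^ (-r)) := by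
            apply ENNReal.ofReal_le_ofReal
            have e1 : ‖z‖ ^ ((4:ℝ) - 2 * d) ≤ ((1 + ‖z‖)/2) ^ ((4:ℝ) - 2*d) := by
              apply Real.rpow_le_rpow_of_nonpos (by linarith) (by linarith) (by linarith)
            calc ‖z‖ ^ ((4:ℝ) - 2 * d) ≤ ((1 + ‖z‖)/2) ^ ((4:ℝ) - 2*d) := e1
              _ = (2:ℝ) ^ r * (1 + ‖z‖) ^ (-r) := by
                  rw [show (4:ℝ) - 2*d = -r by rw [hr]; ring]
                  rw [Real.div_rpow (by linarith) (by norm_num)]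
                  rw [Real.rpow_neg (by norm_num : (0:ℝ) ≤ 2)]
                  field_simp
        _ = ENNReal.ofReal ((2:ℝ) ^ r) * ENNReal.ofReal ((1 + ‖z‖) ^ (-r)) :=
            ENNReal.ofReal_mul (by positivity)
    · calc wfun d z ≤ 1 := wfun_le_one z
        _ ≤ ENNReal.ofReal ((2:ℝ) ^ r * (1 + ‖z‖) ^ (-r)) := by
            rw [← ENNReal.ofReal_one]
            apply ENNReal.ofReal_le_ofReal
            have e1 : (1 + ‖z‖) ^ r ≤ (2:ℝ) ^ r :=
              Real.rpow_le_rpow (by linarith) (by linarith) (le_of_lt hr0)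
            have e2 : (0:ℝ) < (1 + ‖z‖) ^ r := Real.rpow_pos_of_pos h1z r
            rw [Real.rpow_neg (le_of_lt h1z), ← div_eq_mul_inv, le_div_iff₀ e2, one_mul]
            exact e1
        _ = ENNReal.ofReal ((2:ℝ) ^ r) * ENNReal.ofReal ((1 + ‖z‖) ^ (-r)) :=
            ENNReal.ofReal_mul (by positivity)
  calc ∫⁻ z : EuclideanSpace ℝ (Fin d), wfun d z
      ≤ ∫⁻ z : EuclideanSpace ℝ (Fin d),
          ENNReal.ofReal ((2:ℝ) ^ r) * ENNReal.ofReal ((1 + ‖z‖) ^ (-r)) := lintegral_mono hbound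
    _ = ENNReal.ofReal ((2:ℝ) ^ r) *
          ∫⁻ z : EuclideanSpace ℝ (Fin d), ENNReal.ofReal ((1 + ‖z‖) ^ (-r)) :=
        lintegral_const_mul' _ _ ENNReal.ofReal_ne_top
    _ < ∞ := by
        apply ENNReal.mul_lt_top ENNReal.ofReal_lt_top
        apply finite_integral_one_add_norm
        rw [finrank_euclideanSpace_fin, hr]
        linarith

lemma key_lemma {d : ℕ} (hd : 5 ≤ d) :
    ∃ C : ℝ≥0∞, C ≠ ∞ ∧ ∀ x : EuclideanSpace ℝ (Fin d),
      (∫⁻ z, (ENNReal.ofReal ‖x - z‖) ^ ((2 : ℝ) - d) * wfun d z) ≤ C * hfun d x := by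
  haveI : Nonempty (Fin d) := ⟨⟨0, by omega⟩⟩
  have hd5 : (5 : ℝ) ≤ d := by exact_mod_cast hd
  have hexpneg : (2:ℝ) - d ≤ 0 := by linarith
  set V := volume (ball (0 : EuclideanSpace ℝ (Fin d)) 1) with hV
  set Cb : ℝ≥0∞ := V * (2 : ℝ≥0∞) ^ (d : ℕ) * 2 with hCb
  have hCbfin : Cb ≠ ∞ := by
    rw [hCb]
    exact (ENNReal.mul_lt_top (ENNReal.mul_lt_top measure_ball_lt_top
      (by simp [lt_top_iff_ne_top])) (by norm_num)).ne
  set W := ∫⁻ z : EuclideanSpace ℝ (Fin d), wfun d z with hW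
  have hWfin : W ≠ ∞ := (wfun_lintegral_lt_top hd).ne
  set twoE : ℝ≥0∞ := (2 : ℝ≥0∞) ^ ((d:ℝ) - 2) with htwoE
  have htwoEfin : twoE ≠ ∞ := by
    rw [htwoE]
    exact ENNReal.rpow_ne_top_of_nonneg (by linarith) (by norm_num)
  have htwo_cancel : (2 : ℝ≥0∞) ^ ((2:ℝ) - d) * twoE = 1 := by
    rw [htwoE, ← ENNReal.rpow_add _ _ (by norm_num) (by norm_num)]
    norm_num
  refine ⟨(Cb + W) * twoE, ?_, ?_⟩
  · exact (ENNReal.mul_lt_top (ENNReal.add_lt_top.2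
      ⟨lt_top_iff_ne_top.2 hCbfin, lt_top_iff_ne_top.2 hWfin⟩)
      (lt_top_iff_ne_top.2 htwoEfin)).ne
  intro x
  set f : EuclideanSpace ℝ (Fin d) → ℝ≥0∞ :=
    fun z => (ENNReal.ofReal ‖x - z‖) ^ ((2 : ℝ) - d) with hf
  rcases le_total ‖x‖ 2 with hx | hx
  -- small ‖x‖
  · have hhx : (2:ℝ≥0∞) ^ ((2:ℝ) - d) ≤ hfun d x := by
      apply le_min
      · apply rpow_anti _ hexpneg
        calc ENNReal.ofReal ‖x‖ ≤ ENNReal.ofReal 2 := ENNReal.ofReal_le_ofReal hx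
          _ = 2 := by norm_num
      · calc (2:ℝ≥0∞) ^ ((2:ℝ) - d) ≤ (2:ℝ≥0∞) ^ (0:ℝ) :=
            ENNReal.rpow_le_rpow_of_exponent_le (by norm_num) hexpneg
          _ = 1 := ENNReal.rpow_zero
    have hmain : (∫⁻ z, f z * wfun d z) ≤ Cb + W := by
      rw [← lintegral_add_compl (fun z => f z * wfun d z) (measurableSet_ball (x := x) (ε := 1))]
      apply add_le_add
      · calc ∫⁻ z in ball x 1, f z * wfun d z ≤ ∫⁻ z in ball x 1, f z := by
              apply setLIntegral_mono' measurableSet_ball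
              intro z _
              calc f z * wfun d z ≤ f z * 1 := mul_le_mul_right (wfun_le_one z) _
                _ = f z := mul_one _
          _ ≤ V * (2 : ℝ≥0∞) ^ (d : ℕ) * 2 * ENNReal.ofReal ((1:ℝ) ^ 2) :=
              lintegral_ball_le hd x one_pos
          _ = Cb := by rw [hCb]; norm_num
      · calc ∫⁻ z in (ball x 1)ᶜ, f z * wfun d z ≤ ∫⁻ z in (ball x 1)ᶜ, wfun d z := by
              apply setLIntegral_mono' measurableSet_ball.compl
              intro z hz
              have h1 : (1:ℝ) ≤ ‖x - z‖ := by
                have := hz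
                simp only [Set.mem_compl_iff, mem_ball, not_lt] at this
                rwa [dist_comm, dist_eq_norm] at this
              have : f z ≤ 1 := by
                rw [hf]
                calc (ENNReal.ofReal ‖x - z‖) ^ ((2 : ℝ) - d) ≤
                    (ENNReal.ofReal 1) ^ ((2 : ℝ) - d) := by
                      apply rpow_anti (ENNReal.ofReal_le_ofReal h1) hexpneg
                  _ = 1 := by norm_num
              calc f z * wfun d z ≤ 1 * wfun d z := mul_le_mul_left this _
                _ = wfun d z := one_mul _
          _ ≤ W := setLIntegral_le_lintegral _ _
    calc (∫⁻ z, f z * wfun d z) ≤ Cb + W := hmain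
      _ = (Cb + W) * ((2:ℝ≥0∞) ^ ((2:ℝ) - d) * twoE) := by rw [htwo_cancel, mul_one]
      _ = (Cb + W) * twoE * (2:ℝ≥0∞) ^ ((2:ℝ) - d) := by ring
      _ ≤ (Cb + W) * twoE * hfun d x := mul_le_mul_right hhx _
  -- large ‖x‖
  · have hxpos : (0:ℝ) < ‖x‖ := by linarith
    set R : ℝ := ‖x‖ / 2 with hR
    have hRpos : (0:ℝ) < R := by rw [hR]; linarith
    have hR1 : (1:ℝ) ≤ R := by rw [hR]; linarith
    have hoR1 : (1:ℝ≥0∞) ≤ ENNReal.ofReal R := ENNReal.one_le_ofReal.2 hR1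
    have hoRne0 : ENNReal.ofReal R ≠ 0 := by
      simp [ENNReal.ofReal_eq_zero]; linarith
    have hball : (∫⁻ z in ball x R, f z * wfun d z) ≤
        Cb * (ENNReal.ofReal R) ^ ((2:ℝ) - d) := by
      have hstep : ∀ z ∈ ball x R, f z * wfun d z ≤
          (ENNReal.ofReal R) ^ ((4:ℝ) - 2*d) * f z := by
        intro z hz
        have hzn : R ≤ ‖z‖ := by
          have h1 : ‖x - z‖ < R := by
            have := mem_ball.1 hz; rwa [dist_comm, dist_eq_norm] at this
          have h2 : ‖x‖ - ‖z‖ ≤ ‖x - z‖ := norm_sub_norm_le x z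
          have : ‖x‖ = 2 * R := by rw [hR]; ring
          linarith
        have : wfun d z ≤ (ENNReal.ofReal R) ^ ((4:ℝ) - 2*d) := by
          calc wfun d z ≤ (ENNReal.ofReal ‖z‖) ^ ((4:ℝ) - 2 * d) := min_le_left _ _
            _ ≤ (ENNReal.ofReal R) ^ ((4:ℝ) - 2*d) :=
                rpow_anti (ENNReal.ofReal_le_ofReal hzn) (by linarith)
        calc f z * wfun d z ≤ f z * (ENNReal.ofReal R) ^ ((4:ℝ) - 2*d) :=
              mul_le_mul_right this _
          _ = (ENNReal.ofReal R) ^ ((4:ℝ) - 2*d) * f z := mul_comm _ _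
      calc (∫⁻ z in ball x R, f z * wfun d z)
          ≤ ∫⁻ z in ball x R, (ENNReal.ofReal R) ^ ((4:ℝ) - 2*d) * f z :=
            setLIntegral_mono' measurableSet_ball hstep
        _ = (ENNReal.ofReal R) ^ ((4:ℝ) - 2*d) * ∫⁻ z in ball x R, f z :=
            lintegral_const_mul' _ _ (rpow_ne_top_of_one_le hoR1 (by linarith))
        _ ≤ (ENNReal.ofReal R) ^ ((4:ℝ) - 2*d) * (Cb * ENNReal.ofReal (R ^ 2)) := by
            apply mul_le_mul_right
            rw [hCb]
            calc ∫⁻ z in ball x R, f z ≤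
                volume (ball (0 : EuclideanSpace ℝ (Fin d)) 1) * (2 : ℝ≥0∞) ^ (d : ℕ) * 2 *
                  ENNReal.ofReal (R ^ 2) := lintegral_ball_le hd x hRpos
              _ = V * (2 : ℝ≥0∞) ^ (d : ℕ) * 2 * ENNReal.ofReal (R ^ 2) := by rw [hV]
        _ = Cb * ((ENNReal.ofReal R) ^ ((4:ℝ) - 2*d) * ENNReal.ofReal (R ^ 2)) := by ring
        _ = Cb * (ENNReal.ofReal R) ^ ((6:ℝ) - 2*d) := by
            congr 1
            rw [show ENNReal.ofReal (R ^ 2) = (ENNReal.ofReal R) ^ ((2:ℕ):ℝ) by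
              rw [ENNReal.rpow_natCast, ENNReal.ofReal_pow (le_of_lt hRpos)]]
            rw [← ENNReal.rpow_add _ _ hoRne0 ENNReal.ofReal_ne_top]
            congr 1
            push_cast
            ring
        _ ≤ Cb * (ENNReal.ofReal R) ^ ((2:ℝ) - d) := by
            apply mul_le_mul_right
            apply ENNReal.rpow_le_rpow_of_exponent_le hoR1
            linarith
    have hcompl : (∫⁻ z in (ball x R)ᶜ, f z * wfun d z) ≤
        W * (ENNReal.ofReal R) ^ ((2:ℝ) - d) := by
      have hstep : ∀ z ∈ (ball x R)ᶜ, f z * wfun d z ≤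
          (ENNReal.ofReal R) ^ ((2:ℝ) - d) * wfun d z := by
        intro z hz
        have h1 : R ≤ ‖x - z‖ := by
          have := hz
          simp only [Set.mem_compl_iff, mem_ball, not_lt] at this
          rwa [dist_comm, dist_eq_norm] at this
        have : f z ≤ (ENNReal.ofReal R) ^ ((2:ℝ) - d) :=
          rpow_anti (ENNReal.ofReal_le_ofReal h1) hexpneg
        exact mul_le_mul_left this _
      calc (∫⁻ z in (ball x R)ᶜ, f z * wfun d z)
          ≤ ∫⁻ z in (ball x R)ᶜ, (ENNReal.ofReal R) ^ ((2:ℝ) - d) * wfun d z :=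
            setLIntegral_mono' measurableSet_ball.compl hstep
        _ = (ENNReal.ofReal R) ^ ((2:ℝ) - d) * ∫⁻ z in (ball x R)ᶜ, wfun d z :=
            lintegral_const_mul' _ _ (rpow_ne_top_of_one_le hoR1 hexpneg)
        _ ≤ (ENNReal.ofReal R) ^ ((2:ℝ) - d) * W :=
            mul_le_mul_right (setLIntegral_le_lintegral _ _) _
        _ = W * (ENNReal.ofReal R) ^ ((2:ℝ) - d) := mul_comm _ _
    have hRx : (ENNReal.ofReal R) ^ ((2:ℝ) - d) =
        (ENNReal.ofReal ‖x‖) ^ ((2:ℝ) - d) * twoE := by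
      have hx2 : ENNReal.ofReal ‖x‖ = ENNReal.ofReal R * 2 := by
        have hRe : R * 2 = ‖x‖ := by rw [hR]; ring
        calc ENNReal.ofReal ‖x‖ = ENNReal.ofReal (R * 2) := by rw [hRe]
          _ = ENNReal.ofReal R * ENNReal.ofReal 2 := ENNReal.ofReal_mul (le_of_lt hRpos)
          _ = ENNReal.ofReal R * 2 := by rw [ENNReal.ofReal_ofNat]
      rw [hx2, ENNReal.mul_rpow_of_ne_zero hoRne0 (by norm_num)]
      rw [mul_assoc, htwoE, ← ENNReal.rpow_add _ _ (by norm_num) (by norm_num)]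
      norm_num
    have hhx : hfun d x = (ENNReal.ofReal ‖x‖) ^ ((2:ℝ) - d) := by
      apply min_eq_left
      calc (ENNReal.ofReal ‖x‖) ^ ((2:ℝ) - d) ≤ (ENNReal.ofReal ‖x‖) ^ (0:ℝ) := by
            apply ENNReal.rpow_le_rpow_of_exponent_le _ hexpneg
            apply ENNReal.one_le_ofReal.2; linarith
        _ = 1 := ENNReal.rpow_zero
    calc (∫⁻ z, f z * wfun d z)
        = (∫⁻ z in ball x R, f z * wfun d z) + ∫⁻ z in (ball x R)ᶜ, f z * wfun d z :=
          (lintegral_add_compl _ measurableSet_ball).symm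
      _ ≤ Cb * (ENNReal.ofReal R) ^ ((2:ℝ) - d) + W * (ENNReal.ofReal R) ^ ((2:ℝ) - d) :=
          add_le_add hball hcompl
      _ = (Cb + W) * (ENNReal.ofReal R) ^ ((2:ℝ) - d) := by ring
      _ = (Cb + W) * twoE * hfun d x := by rw [hRx, hhx]; ring

lemma sum_inv_sq_le' : ∀ m : ℕ, 1 ≤ m →
    ∑ j ∈ Finset.Icc 1 m, (1:ℝ)/(j:ℝ)^2 ≤ 2 - 1/(m:ℝ) := by
  intro m
  induction m with
  | zero => omega
  | succ n ihn =>
    intro _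
    rcases Nat.eq_zero_or_pos n with rfl | hn
    · norm_num
    · rw [Finset.sum_Icc_succ_top (by omega)]
      have h1 := ihn hn
      have hn1 : (1:ℝ) ≤ (n:ℝ) := by exact_mod_cast hn
      have key : (1:ℝ)/((n:ℝ)+1)^2 + 1/((n:ℝ)+1) ≤ 1/(n:ℝ) := by
        rw [div_add_div _ _ (by positivity) (by positivity), div_le_div_iff₀ (by positivity)
          (by positivity)]
        nlinarith
      push_cast
      linarith

lemma sum_inv_sq_le (m : ℕ) : ∑ j ∈ Finset.Icc 1 m, (1:ℝ)/(j:ℝ)^2 ≤ 2 := by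
  rcases Nat.eq_zero_or_pos m with rfl | hm
  · simp
  · have h := sum_inv_sq_le' m hm
    have : (0:ℝ) < (m:ℝ) := by exact_mod_cast hm
    have : (0:ℝ) < 1/(m:ℝ) := by positivity
    linarith

lemma conv_sum_le (p : ℕ) :
    ∑ j ∈ Finset.Icc 1 (p+1), (1:ℝ)/((j:ℝ)^2 * ((p+2-j:ℕ):ℝ)^2) ≤ 8/(((p:ℝ)+2))^2 := by
  have hmain : ∀ j ∈ Finset.Icc 1 (p+1), (1:ℝ)/((j:ℝ)^2 * ((p+2-j:ℕ):ℝ)^2) ≤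
      2/((p:ℝ)+2)^2 * (1/(j:ℝ)^2 + 1/((p+2-j:ℕ):ℝ)^2) := by
    intro j hj
    obtain ⟨hj1, hj2⟩ := Finset.mem_Icc.mp hj
    set a : ℝ := (j:ℝ) with ha
    set b : ℝ := ((p+2-j:ℕ):ℝ) with hb
    have ha1 : (1:ℝ) ≤ a := by rw [ha]; exact_mod_cast hj1
    have hb1 : (1:ℝ) ≤ b := by
      rw [hb]
      have : 1 ≤ p+2-j := by omega
      exact_mod_cast this
    have hab : a + b = (p:ℝ) + 2 := by
      rw [ha, hb]
      have h' : j + (p+2-j) = p+2 := by omega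
      rw [← Nat.cast_add, h']
      push_cast
      ring
    rw [← hab]
    have hR : 2/(a+b)^2 * (1/a^2 + 1/b^2) = (2*(a^2+b^2)) / ((a+b)^2*(a^2*b^2)) := by
      field_simp
      ring
    rw [hR, div_le_div_iff₀ (by positivity) (by positivity)]
    nlinarith [sq_nonneg (a-b), mul_nonneg (mul_nonneg (sq_nonneg (a-b)) (sq_nonneg a))
      (sq_nonneg b)]
  have hrev : ∑ j ∈ Finset.Icc 1 (p+1), (1:ℝ)/((p+2-j:ℕ):ℝ)^2 =
      ∑ j ∈ Finset.Icc 1 (p+1), (1:ℝ)/(j:ℝ)^2 := by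
    apply Finset.sum_nbij' (fun j => p+2-j) (fun j => p+2-j)
    · intro a haa; rw [Finset.mem_Icc] at *; omega
    · intro a haa; rw [Finset.mem_Icc] at *; omega
    · intro a haa; rw [Finset.mem_Icc] at haa; omega
    · intro a haa; rw [Finset.mem_Icc] at haa; omega
    · intro a haa; rfl
  calc ∑ j ∈ Finset.Icc 1 (p+1), (1:ℝ)/((j:ℝ)^2 * ((p+2-j:ℕ):ℝ)^2)
      ≤ ∑ j ∈ Finset.Icc 1 (p+1),
          2/((p:ℝ)+2)^2 * (1/(j:ℝ)^2 + 1/((p+2-j:ℕ):ℝ)^2) := Finset.sum_le_sum hmain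
    _ = 2/((p:ℝ)+2)^2 * ((∑ j ∈ Finset.Icc 1 (p+1), (1:ℝ)/(j:ℝ)^2) +
          ∑ j ∈ Finset.Icc 1 (p+1), (1:ℝ)/((p+2-j:ℕ):ℝ)^2) := by
        rw [← Finset.mul_sum, Finset.sum_add_distrib]
    _ ≤ 2/((p:ℝ)+2)^2 * (2 + 2) := by
        apply mul_le_mul_of_nonneg_left _ (by positivity)
        rw [hrev]
        have := sum_inv_sq_le (p+1)
        linarith
    _ = 8/(((p:ℝ)+2))^2 := by ring

noncomputable def Aseq (c : ℝ≥0) : ℕ → ℝ≥0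
  | 0 => 0
  | 1 => c
  | (p + 2) => c * ∑ j ∈ (Finset.Icc 1 (p + 1)).attach,
      ((p + 2).choose j.1 : ℝ≥0) * Aseq c j.1 * Aseq c (p + 2 - j.1)
  termination_by p => p
  decreasing_by
  · have := Finset.mem_Icc.mp j.2; omega
  · have := Finset.mem_Icc.mp j.2; omega

lemma Aseq_growth (c : ℝ≥0) (hc : 1 ≤ c) :
    ∀ p, 1 ≤ p → ((Aseq c p : ℝ)) ≤
      (8*(c:ℝ))⁻¹ * (8*(c:ℝ)^2)^p * (p.factorial:ℝ) / (p:ℝ)^2 := by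
  have hc0 : (0:ℝ) < c := lt_of_lt_of_le one_pos (by exact_mod_cast hc)
  intro p
  induction p using Nat.strong_induction_on with
  | _ p ih =>
    match p with
    | 0 => omega
    | 1 =>
      intro _
      rw [Aseq]
      simp only [pow_one, Nat.factorial_one, Nat.cast_one, one_pow, div_one, mul_one]
      rw [show (8*(c:ℝ))⁻¹ * (8*(c:ℝ)^2) = (8*(c:ℝ))⁻¹ * (8*(c:ℝ)) * (c:ℝ) from by ring,
        inv_mul_cancel₀ (by positivity), one_mul]
    | (p+2) =>
      intro _
      set K : ℝ := 8*(c:ℝ)^2 with hK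
      have hK0 : (0:ℝ) < K := by rw [hK]; positivity
      have hterm : ∀ j ∈ Finset.Icc 1 (p+1),
          (((p+2).choose j : ℕ):ℝ) * ((Aseq c j : ℝ≥0):ℝ) * ((Aseq c (p+2-j) : ℝ≥0):ℝ) ≤
          (8*(c:ℝ))⁻¹ * (8*(c:ℝ))⁻¹ * K^(p+2) * ((p+2).factorial : ℝ) *
            (1/((j:ℝ)^2 * ((p+2-j:ℕ):ℝ)^2)) := by
        intro j hj
        obtain ⟨hj1, hj2⟩ := Finset.mem_Icc.mp hj
        have h1 := ih j (by omega) (by omega)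
        have h2 := ih (p+2-j) (by omega) (by omega)
        have e1 : K^j * K^(p+2-j) = K^(p+2) := by
          rw [← pow_add]
          congr 1
          omega
        have e2 : (((p+2).choose j : ℕ) : ℝ) * (j.factorial:ℝ) * ((p+2-j).factorial:ℝ) =
            ((p+2).factorial:ℝ) := by
          exact_mod_cast congrArg (fun n : ℕ => (n:ℝ))
            (Nat.choose_mul_factorial_mul_factorial (by omega : j ≤ p+2))
        have hAnn : (0:ℝ) ≤ ((Aseq c (p+2-j) : ℝ≥0):ℝ) := (Aseq c (p+2-j)).coe_nonneg
        calc (((p+2).choose j : ℕ):ℝ) * ((Aseq c j : ℝ≥0):ℝ) * ((Aseq c (p+2-j) : ℝ≥0):ℝ)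
            ≤ ((((p+2).choose j : ℕ):ℝ) *
                ((8*(c:ℝ))⁻¹ * K^j * (j.factorial:ℝ) / (j:ℝ)^2)) *
                ((8*(c:ℝ))⁻¹ * K^(p+2-j) * (((p+2-j:ℕ)).factorial:ℝ) / ((p+2-j:ℕ):ℝ)^2) :=
              mul_le_mul (mul_le_mul le_rfl h1 ((Aseq c j).coe_nonneg) (Nat.cast_nonneg _))
                h2 hAnn (by positivity)
          _ = ((8*(c:ℝ))⁻¹ * (8*(c:ℝ))⁻¹) * (K^j * K^(p+2-j)) *
                ((((p+2).choose j : ℕ):ℝ) * (j.factorial:ℝ) * ((p+2-j).factorial:ℝ)) *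
                (1/((j:ℝ)^2 * ((p+2-j:ℕ):ℝ)^2)) := by ring
          _ = (8*(c:ℝ))⁻¹ * (8*(c:ℝ))⁻¹ * K^(p+2) * ((p+2).factorial : ℝ) *
                (1/((j:ℝ)^2 * ((p+2-j:ℕ):ℝ)^2)) := by rw [e1, e2]
      have hsum : ∑ j ∈ Finset.Icc 1 (p+1),
          (((p+2).choose j : ℕ):ℝ) * ((Aseq c j : ℝ≥0):ℝ) * ((Aseq c (p+2-j) : ℝ≥0):ℝ) ≤
          (8*(c:ℝ))⁻¹ * (8*(c:ℝ))⁻¹ * K^(p+2) * ((p+2).factorial : ℝ) * (8/(((p:ℝ)+2))^2) := by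
        calc ∑ j ∈ Finset.Icc 1 (p+1),
            (((p+2).choose j : ℕ):ℝ) * ((Aseq c j : ℝ≥0):ℝ) * ((Aseq c (p+2-j) : ℝ≥0):ℝ)
            ≤ ∑ j ∈ Finset.Icc 1 (p+1),
              (8*(c:ℝ))⁻¹ * (8*(c:ℝ))⁻¹ * K^(p+2) * ((p+2).factorial : ℝ) *
                (1/((j:ℝ)^2 * ((p+2-j:ℕ):ℝ)^2)) := Finset.sum_le_sum hterm
          _ = (8*(c:ℝ))⁻¹ * (8*(c:ℝ))⁻¹ * K^(p+2) * ((p+2).factorial : ℝ) *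
                ∑ j ∈ Finset.Icc 1 (p+1), (1:ℝ)/((j:ℝ)^2 * ((p+2-j:ℕ):ℝ)^2) := by
              rw [← Finset.mul_sum]
          _ ≤ (8*(c:ℝ))⁻¹ * (8*(c:ℝ))⁻¹ * K^(p+2) * ((p+2).factorial : ℝ) *
                (8/(((p:ℝ)+2))^2) := by
              apply mul_le_mul_of_nonneg_left (conv_sum_le p) (by positivity)
      rw [Aseq]
      push_cast
      rw [Finset.sum_attach (Finset.Icc 1 (p+1))
        (fun j => (((p+2).choose j : ℕ):ℝ) * ((Aseq c j : ℝ≥0):ℝ) *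
          ((Aseq c (p+2-j) : ℝ≥0):ℝ))]
      calc (c:ℝ) * ∑ j ∈ Finset.Icc 1 (p+1),
            (((p+2).choose j : ℕ):ℝ) * ((Aseq c j : ℝ≥0):ℝ) * ((Aseq c (p+2-j) : ℝ≥0):ℝ)
          ≤ (c:ℝ) * ((8*(c:ℝ))⁻¹ * (8*(c:ℝ))⁻¹ * K^(p+2) * ((p+2).factorial : ℝ) *
              (8/(((p:ℝ)+2))^2)) := mul_le_mul_of_nonneg_left hsum c.coe_nonneg
        _ = (8*(c:ℝ))⁻¹ * K^(p+2) * ((p+2).factorial : ℝ) / ((p:ℝ)+2)^2 := by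
            field_simp

lemma Aseq_le_pow (c : ℝ≥0) (hc : 1 ≤ c) (p : ℕ) (hp : 1 ≤ p) :
    Aseq c p ≤ (8*c^2)^p * (p.factorial : ℝ≥0) := by
  have hc0 : (0:ℝ) < c := lt_of_lt_of_le one_pos (by exact_mod_cast hc)
  rw [← NNReal.coe_le_coe]
  push_cast
  have h := Aseq_growth c hc p hp
  have hp1 : (1:ℝ) ≤ (p:ℝ)^2 := by
    have : (1:ℝ) ≤ (p:ℝ) := by exact_mod_cast hp
    nlinarith
  have hc1 : (1:ℝ) ≤ (c:ℝ) := by exact_mod_cast hc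
  have h8 : (8*(c:ℝ))⁻¹ ≤ 1 := by
    apply inv_le_one_of_one_le₀
    nlinarith
  have hX : (0:ℝ) ≤ (8*(c:ℝ)^2)^p * (p.factorial:ℝ) := by positivity
  calc ((Aseq c p : ℝ≥0) : ℝ) ≤ (8*(c:ℝ))⁻¹ * (8*(c:ℝ)^2)^p * (p.factorial:ℝ) / (p:ℝ)^2 := h
    _ ≤ (8*(c:ℝ)^2)^p * (p.factorial:ℝ) := by
        rw [div_le_iff₀ (by positivity : (0:ℝ) < (p:ℝ)^2)]
        nlinarith [mul_le_mul_of_nonneg_right h8 hX, mul_le_mul_of_nonneg_left hp1 hX]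

lemma greenC_nonneg (d : ℕ) (hd : 5 ≤ d) : 0 ≤ greenC d := by
  rw [greenC]
  apply div_nonneg
  · apply le_of_lt
    apply Real.Gamma_pos_of_pos
    have : (5:ℝ) ≤ d := by exact_mod_cast hd
    linarith
  · positivity

lemma ofReal_green_le (d : ℕ) (hd : 5 ≤ d) (x y : EuclideanSpace ℝ (Fin d)) :
    ENNReal.ofReal (green d x y) ≤
      ENNReal.ofReal (greenC d) * (ENNReal.ofReal ‖x - y‖) ^ ((2:ℝ) - d) := by
  have hd5 : (5:ℝ) ≤ d := by exact_mod_cast hd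
  rcases eq_or_lt_of_le (norm_nonneg (x - y)) with h0 | h0
  · rw [green, ← h0, Real.zero_rpow (by linarith), mul_zero]
    simp
  · rw [green, ENNReal.ofReal_mul (greenC_nonneg d hd),
      ← ENNReal.ofReal_rpow_of_pos h0]

lemma M_le_Aseq (d : ℕ) (hd : 5 ≤ d) (φ : EuclideanSpace ℝ (Fin d) → ℝ)
    (hφ_le_one : ∀ y, φ y ≤ 1)
    (hφ_supp : ∀ y, y ∉ Metric.ball (0 : EuclideanSpace ℝ (Fin d)) 1 → φ y = 0)
    (C : ℝ≥0∞) (hC : C ≠ ∞)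
    (hCkey : ∀ x : EuclideanSpace ℝ (Fin d),
      (∫⁻ z, (ENNReal.ofReal ‖x - z‖) ^ ((2 : ℝ) - d) * wfun d z) ≤ C * hfun d x)
    (c : ℝ≥0) (hc : ENNReal.ofReal (greenC d) * C ≤ (c:ℝ≥0∞)) :
    ∀ p, ∀ x, M d φ p x ≤ (Aseq c p : ℝ≥0∞) * hfun d x := by
  have hphi : ∀ y, ENNReal.ofReal (φ y) ≤ wfun d y := by
    intro y
    by_cases hy : y ∈ Metric.ball (0 : EuclideanSpace ℝ (Fin d)) 1
    · have h1 : ENNReal.ofReal ‖y‖ ≤ 1 := by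
        rw [mem_ball_zero_iff] at hy
        calc ENNReal.ofReal ‖y‖ ≤ ENNReal.ofReal 1 := ENNReal.ofReal_le_ofReal hy.le
          _ = 1 := ENNReal.ofReal_one
      have hw1 : (1:ℝ≥0∞) ≤ (ENNReal.ofReal ‖y‖) ^ ((4:ℝ) - 2*d) := by
        apply one_le_rpow_of_le_one h1
        have : (5:ℝ) ≤ d := by exact_mod_cast hd
        linarith
      calc ENNReal.ofReal (φ y) ≤ ENNReal.ofReal 1 := ENNReal.ofReal_le_ofReal (hφ_le_one y)
        _ = 1 := ENNReal.ofReal_one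
        _ = wfun d y := (min_eq_right hw1).symm
    · rw [hφ_supp y hy]
      simp
  intro p
  induction p using Nat.strong_induction_on with
  | _ p ih =>
    match p with
    | 0 =>
      intro x
      rw [M]
      exact zero_le
    | 1 =>
      intro x
      rw [M]
      have hpoint : ∀ y, ENNReal.ofReal (green d x y) * ENNReal.ofReal (φ y) ≤
          ENNReal.ofReal (greenC d) *
            ((ENNReal.ofReal ‖x - y‖) ^ ((2:ℝ) - d) * wfun d y) := by
        intro y
        calc ENNReal.ofReal (green d x y) * ENNReal.ofReal (φ y)
            ≤ (ENNReal.ofReal (greenC d) * (ENNReal.ofReal ‖x - y‖) ^ ((2:ℝ) - d)) * wfun d y :=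
              mul_le_mul' (ofReal_green_le d hd x y) (hphi y)
          _ = ENNReal.ofReal (greenC d) *
              ((ENNReal.ofReal ‖x - y‖) ^ ((2:ℝ) - d) * wfun d y) := by ring
      calc (∫⁻ y, ENNReal.ofReal (green d x y) * ENNReal.ofReal (φ y))
          ≤ ∫⁻ y, ENNReal.ofReal (greenC d) *
              ((ENNReal.ofReal ‖x - y‖) ^ ((2:ℝ) - d) * wfun d y) := lintegral_mono hpoint
        _ = ENNReal.ofReal (greenC d) *
              ∫⁻ y, (ENNReal.ofReal ‖x - y‖) ^ ((2:ℝ) - d) * wfun d y :=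
            lintegral_const_mul' _ _ ENNReal.ofReal_ne_top
        _ ≤ ENNReal.ofReal (greenC d) * (C * hfun d x) := mul_le_mul_right (hCkey x) _
        _ = (ENNReal.ofReal (greenC d) * C) * hfun d x := by ring
        _ ≤ (c:ℝ≥0∞) * hfun d x := mul_le_mul_left hc _
        _ = (Aseq c 1 : ℝ≥0∞) * hfun d x := by rw [Aseq]
    | (p+2) =>
      intro x
      rw [M]
      have hterm : ∀ j : {y // y ∈ Finset.Icc 1 (p+1)},
          ((p + 2).choose j.1 : ℝ≥0∞) *
            (∫⁻ z, ENNReal.ofReal (green d x z) * M d φ j.1 z * M d φ (p + 2 - j.1) z) ≤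
          ((p + 2).choose j.1 : ℝ≥0∞) *
            (((c : ℝ≥0∞) * (Aseq c j.1 : ℝ≥0∞) * (Aseq c (p+2-j.1) : ℝ≥0∞)) * hfun d x) := by
        intro j
        apply mul_le_mul_right
        obtain ⟨hj1, hj2⟩ := Finset.mem_Icc.mp j.2
        have ihj := ih j.1 (by omega)
        have ihk := ih (p+2-j.1) (by omega)
        set Aj := ((Aseq c j.1 : ℝ≥0) : ℝ≥0∞) with hAj
        set Ak := ((Aseq c (p+2-j.1) : ℝ≥0) : ℝ≥0∞) with hAk
        have hAfin : ENNReal.ofReal (greenC d) * Aj * Ak ≠ ∞ :=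
          ENNReal.mul_ne_top (ENNReal.mul_ne_top ENNReal.ofReal_ne_top ENNReal.coe_ne_top)
            ENNReal.coe_ne_top
        have hpoint : ∀ z, ENNReal.ofReal (green d x z) * M d φ j.1 z * M d φ (p + 2 - j.1) z ≤
            (ENNReal.ofReal (greenC d) * Aj * Ak) *
              ((ENNReal.ofReal ‖x - z‖) ^ ((2:ℝ) - d) * wfun d z) := by
          intro z
          calc ENNReal.ofReal (green d x z) * M d φ j.1 z * M d φ (p + 2 - j.1) z
              ≤ (ENNReal.ofReal (greenC d) * (ENNReal.ofReal ‖x - z‖) ^ ((2:ℝ) - d)) *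
                  (Aj * hfun d z) * (Ak * hfun d z) :=
                mul_le_mul' (mul_le_mul' (ofReal_green_le d hd x z) (ihj z)) (ihk z)
            _ = (ENNReal.ofReal (greenC d) * Aj * Ak) *
                  ((ENNReal.ofReal ‖x - z‖) ^ ((2:ℝ) - d) * (hfun d z * hfun d z)) := by ring
            _ = (ENNReal.ofReal (greenC d) * Aj * Ak) *
                  ((ENNReal.ofReal ‖x - z‖) ^ ((2:ℝ) - d) * wfun d z) := by
                rw [hfun_mul_self hd]
        calc (∫⁻ z, ENNReal.ofReal (green d x z) * M d φ j.1 z * M d φ (p + 2 - j.1) z)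
            ≤ ∫⁻ z, (ENNReal.ofReal (greenC d) * Aj * Ak) *
                ((ENNReal.ofReal ‖x - z‖) ^ ((2:ℝ) - d) * wfun d z) := lintegral_mono hpoint
          _ = (ENNReal.ofReal (greenC d) * Aj * Ak) *
                ∫⁻ z, (ENNReal.ofReal ‖x - z‖) ^ ((2:ℝ) - d) * wfun d z :=
              lintegral_const_mul' _ _ hAfin
          _ ≤ (ENNReal.ofReal (greenC d) * Aj * Ak) * (C * hfun d x) :=
              mul_le_mul_right (hCkey x) _
          _ = (ENNReal.ofReal (greenC d) * C) * (Aj * Ak * hfun d x) := by ring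
          _ ≤ (c:ℝ≥0∞) * (Aj * Ak * hfun d x) := mul_le_mul_left hc _
          _ = ((c:ℝ≥0∞) * Aj * Ak) * hfun d x := by ring
      calc (∑ j ∈ (Finset.Icc 1 (p + 1)).attach, ((p + 2).choose j.1 : ℝ≥0∞) *
            ∫⁻ z, ENNReal.ofReal (green d x z) * M d φ j.1 z * M d φ (p + 2 - j.1) z)
          ≤ ∑ j ∈ (Finset.Icc 1 (p + 1)).attach, ((p + 2).choose j.1 : ℝ≥0∞) *
            (((c : ℝ≥0∞) * ((Aseq c j.1 : ℝ≥0) : ℝ≥0∞) * ((Aseq c (p+2-j.1) : ℝ≥0) : ℝ≥0∞)) *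
              hfun d x) := Finset.sum_le_sum (fun j _ => hterm j)
        _ = ((Aseq c (p+2) : ℝ≥0) : ℝ≥0∞) * hfun d x := by
            rw [Aseq]
            push_cast
            rw [Finset.mul_sum, Finset.sum_mul]
            apply Finset.sum_congr rfl
            intro j _
            ring

/-- Lemma 2 of the paper: for `d ≥ 5` and `0 ≤ φ ≤ 1` supported in `B_1`,
there is a finite constant `K_d` with `M_p^φ(x) ≤ K_d^p p! (|x|^{2−d} ∧ 1)`. -/
theorem moment_bound_high_dim (d : ℕ) (hd : 5 ≤ d)
    (φ : EuclideanSpace ℝ (Fin d) → ℝ) (hφ_meas : Measurable φ)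
    (hφ_nonneg : ∀ y, 0 ≤ φ y) (hφ_le_one : ∀ y, φ y ≤ 1)
    (hφ_supp : ∀ y, y ∉ Metric.ball (0 : EuclideanSpace ℝ (Fin d)) 1 → φ y = 0) :
    ∃ K : ℝ≥0, ∀ (x : EuclideanSpace ℝ (Fin d)) (p : ℕ), 1 ≤ p →
      M d φ p x ≤ (K : ℝ≥0∞) ^ p * (p.factorial : ℝ≥0∞) *
        min ((ENNReal.ofReal ‖x‖) ^ ((2 : ℝ) - d)) 1 := by
  obtain ⟨C, hC, hCkey⟩ := key_lemma hd
  have hfinCgC : ENNReal.ofReal (greenC d) * C ≠ ∞ :=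
    ENNReal.mul_ne_top ENNReal.ofReal_ne_top hC
  set c : ℝ≥0 := 1 + (ENNReal.ofReal (greenC d) * C).toNNReal with hcdef
  have hc : ENNReal.ofReal (greenC d) * C ≤ (c:ℝ≥0∞) := by
    rw [hcdef]
    push_cast
    calc ENNReal.ofReal (greenC d) * C
        = ((ENNReal.ofReal (greenC d) * C).toNNReal : ℝ≥0∞) :=
          (ENNReal.coe_toNNReal hfinCgC).symm
      _ ≤ 1 + ((ENNReal.ofReal (greenC d) * C).toNNReal : ℝ≥0∞) := le_add_self
  have hc1 : 1 ≤ c := by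
    rw [hcdef]
    exact le_self_add
  refine ⟨8 * c^2, ?_⟩
  intro x p hp
  have h1 := M_le_Aseq d hd φ hφ_le_one hφ_supp C hC hCkey c hc p x
  have h2 := Aseq_le_pow c hc1 p hp
  have hfx : hfun d x = min ((ENNReal.ofReal ‖x‖) ^ ((2 : ℝ) - d)) 1 := rfl
  calc M d φ p x ≤ ((Aseq c p : ℝ≥0) : ℝ≥0∞) * hfun d x := h1
    _ ≤ (((8*c^2)^p * (p.factorial : ℝ≥0) : ℝ≥0) : ℝ≥0∞) * hfun d x := by
        exact mul_le_mul_left (ENNReal.coe_le_coe.2 h2) _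
    _ = ((8 * c^2 : ℝ≥0) : ℝ≥0∞) ^ p * (p.factorial : ℝ≥0∞) *
          min ((ENNReal.ofReal ‖x‖) ^ ((2 : ℝ) - d)) 1 := by
        rw [hfx]
        push_cast
        ring
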